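/- Let Λ = (ℤ/Nℤ)² with lattice Laplacian Δ and Green's function G as above, and let 0 ∈ Λ be a fixed vertex. The matrix Δ_{0ᶜ0ᶜ} = (Δ_{ij})_{i,j∈Λ∖{0}} is invertible and for all i, j ∈ Λ∖{0}: −4((Δ_{0ᶜ0ᶜ})^{−1})_{ij} = G_{ij} − G_{i0} − G_{0j} + G_{00}. -/

import Mathlib

open Matrix Filter

/-- The discrete two-dimensional torus `(ℤ/Nℤ)²`. -/
abbrev Torus (N : ℕ) := ZMod N × ZMod N

/-- The four nearest-neighbor steps on the torus. -/
def torusSteps (N : ℕ) : List (Torus N) := [(1, 0), (-1, 0), (0, 1), (0, -1)]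

/-- One-step transition kernel of simple random walk on the torus:
each of the four steps is taken with probability `1/4`. -/
noncomputable def srwKernel (N : ℕ) : Matrix (Torus N) (Torus N) ℝ :=
  fun i j => ((torusSteps N).count (j - i) : ℝ) / 4

/-- The lattice Laplacian on the torus: `Δ_ij = 1` for neighbors `i ∼ j`
(counted with multiplicity), `Δ_ii = -4`, and `0` otherwise. -/
noncomputable def lap (N : ℕ) : Matrix (Torus N) (Torus N) ℝ :=
  fun i j => if i = j then -4 else ((torusSteps N).count (j - i) : ℝ)

/-- The Green's function
`G_ij = lim_{λ↓0} ∑_{t≥0} (P_i(X_t = j) − 1/|Λ|) e^{−λt}` of simple random walk. -/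
noncomputable def green (N : ℕ) [NeZero N] (i j : Torus N) : ℝ :=
  limUnder (nhdsWithin (0 : ℝ) (Set.Ioi 0))
    (fun lam : ℝ =>
      ∑' t : ℕ, ((srwKernel N ^ t) i j - 1 / (N ^ 2 : ℝ)) * Real.exp (-lam * t))

namespace Stmt7
variable (N : ℕ) [NeZero N]

lemma sum_count : ∑ d : Torus N, ((torusSteps N).count d : ℝ) = 4 := by
  have : ∀ d : Torus N, ((torusSteps N).count d : ℝ) =
      (if d = ((1:ZMod N), (0:ZMod N)) then (1:ℝ) else 0) + (if d = (-1, 0) then 1 else 0)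
      + (if d = (0, 1) then 1 else 0) + (if d = (0, -1) then 1 else 0) := by
    intro d
    simp [torusSteps, List.count_cons, @eq_comm _ _ d]
    push_cast
    ring
  simp only [this, Finset.sum_add_distrib, Finset.sum_ite_eq', Finset.mem_univ, if_true]
  norm_num

lemma row_sum (i : Torus N) : ∑ j, srwKernel N i j = 1 := by
  have h : ∑ j : Torus N, ((torusSteps N).count (j - i) : ℝ) = 4 := by
    rw [← sum_count N]
    exact Fintype.sum_equiv (Equiv.subRight i) _ _ (fun j => rfl)
  simp only [srwKernel, ← Finset.sum_div, h]
  norm_num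

lemma col_sum (i : Torus N) : ∑ j, srwKernel N j i = 1 := by
  have h : ∑ j : Torus N, ((torusSteps N).count (i - j) : ℝ) = 4 := by
    rw [← sum_count N]
    exact Fintype.sum_equiv (Equiv.subLeft i) _ _ (fun j => rfl)
  simp only [srwKernel, ← Finset.sum_div, h]
  norm_num

omit [NeZero N] in
lemma kernel_nonneg (i j : Torus N) : 0 ≤ srwKernel N i j := by
  unfold srwKernel; positivity

lemma pow_row_sum (t : ℕ) (i : Torus N) : ∑ j, (srwKernel N ^ t) i j = 1 := by
  induction t generalizing i with
  | zero => simp [Matrix.one_apply]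
  | succ t ih =>
    rw [pow_succ]
    simp only [Matrix.mul_apply]
    rw [Finset.sum_comm]
    calc ∑ k, ∑ j, (srwKernel N ^ t) i k * srwKernel N k j
        = ∑ k : Torus N, (srwKernel N ^ t) i k * ∑ j, srwKernel N k j := by
          simp [Finset.mul_sum]
      _ = 1 := by simp [row_sum, ih]

lemma pow_nonneg (t : ℕ) (i j : Torus N) : 0 ≤ (srwKernel N ^ t) i j := by
  induction t generalizing i j with
  | zero => simp [Matrix.one_apply]; positivity
  | succ t ih =>
    rw [pow_succ, Matrix.mul_apply]
    exact Finset.sum_nonneg fun k _ => mul_nonneg (ih i k) (kernel_nonneg N k j)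

lemma pow_le_one (t : ℕ) (i j : Torus N) : (srwKernel N ^ t) i j ≤ 1 := by
  have := pow_row_sum N t i
  calc (srwKernel N ^ t) i j ≤ ∑ k, (srwKernel N ^ t) i k :=
        Finset.single_le_sum (fun k _ => pow_nonneg N t i k) (Finset.mem_univ j)
    _ = 1 := this


/-- The all-`1/N²` matrix. -/
noncomputable def Jm : Matrix (Torus N) (Torus N) ℝ := fun _ _ => 1 / (N^2 : ℝ)

lemma card_torus : (Fintype.card (Torus N) : ℝ) = (N:ℝ)^2 := by
  simp [ZMod.card, sq]

lemma Nsq_ne : ((N:ℝ)^2) ≠ 0 := by have := NeZero.ne N; positivity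

lemma PJ : srwKernel N * Jm N = Jm N := by
  ext i j
  simp only [Matrix.mul_apply, Jm, ← Finset.sum_mul, row_sum, one_mul]

lemma JP : Jm N * srwKernel N = Jm N := by
  ext i j
  simp only [Matrix.mul_apply, Jm, ← Finset.mul_sum, col_sum, mul_one]

lemma JJ : Jm N * Jm N = Jm N := by
  ext i j
  simp only [Matrix.mul_apply, Jm, Finset.sum_const, nsmul_eq_mul]
  rw [Finset.card_univ, Fintype.card_prod, ZMod.card]
  have := NeZero.ne N
  field_simp
  push_cast
  ring

lemma powJ (t : ℕ) : srwKernel N ^ t * Jm N = Jm N := by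
  induction t with
  | zero => simp
  | succ t ih => rw [pow_succ, Matrix.mul_assoc, PJ, ih]

/-- `Q = P - J`. -/
noncomputable def Qm : Matrix (Torus N) (Torus N) ℝ := srwKernel N - Jm N
/-- `M = 1 - P + J = 1 - Q`. -/
noncomputable def Mm : Matrix (Torus N) (Torus N) ℝ := 1 - srwKernel N + Jm N

omit [NeZero N] in
lemma Mm_eq : Mm N = 1 - Qm N := by unfold Mm Qm; abel

lemma Qpow (t : ℕ) : Qm N ^ (t+1) = srwKernel N ^ (t+1) - Jm N := by
  induction t with
  | zero => simp [Qm]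
  | succ t ih =>
    rw [pow_succ, ih]
    unfold Qm
    rw [Matrix.sub_mul, Matrix.mul_sub, Matrix.mul_sub, powJ, JP, JJ, ← pow_succ]
    abel

lemma MJ : Mm N * Jm N = Jm N := by
  unfold Mm
  rw [Matrix.add_mul, Matrix.sub_mul, Matrix.one_mul, PJ, JJ]
  abel

lemma JM : Jm N * Mm N = Jm N := by
  unfold Mm
  rw [Matrix.mul_add, Matrix.mul_sub, Matrix.mul_one, JP, JJ]
  abel


omit [NeZero N] in
lemma kernel_step_pos (x : Torus N) {s : Torus N} (hs : s ∈ torusSteps N) :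
    0 < srwKernel N x (x + s) := by
  unfold srwKernel
  have : (x + s) - x = s := by abel
  rw [this]
  have : 0 < (torusSteps N).count s := List.count_pos_iff.mpr hs
  positivity

lemma det_Mm_ne_zero : (Mm N).det ≠ 0 := by
  intro hdet
  obtain ⟨v, hv, hMv⟩ := (Matrix.exists_mulVec_eq_zero_iff).mpr hdet
  -- basic identity: for each x, v x = (P v) x - (∑ v)/N² · ... unfold
  set S : ℝ := ∑ y, v y with hS
  have hrow : ∀ x, v x - (∑ y, srwKernel N x y * v y) + S / (N^2 : ℝ) = 0 := by
    intro x
    have := congrFun hMv x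
    simp only [Matrix.mulVec, dotProduct, Mm, Jm, Matrix.add_apply, Matrix.sub_apply,
      Matrix.one_apply, Pi.zero_apply] at this
    calc v x - (∑ y, srwKernel N x y * v y) + S / (N^2:ℝ)
        = ∑ y, (((if x = y then (1:ℝ) else 0) - srwKernel N x y) + 1/(N^2:ℝ)) * v y := by
          simp only [add_mul, sub_mul, Finset.sum_add_distrib, Finset.sum_sub_distrib,
            ite_mul, one_mul, zero_mul, Finset.sum_ite_eq, Finset.mem_univ, if_true]
          rw [← Finset.mul_sum, ← hS]
          ring
      _ = 0 := this
  -- sum over x gives S = 0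
  have hScard : (((Finset.univ : Finset (Torus N))).card : ℝ) = (N:ℝ)^2 := by
    rw [Finset.card_univ, Fintype.card_prod, ZMod.card]; push_cast; ring
  have hS0 : S = 0 := by
    have h2 : ∑ x : Torus N, (v x - (∑ y, srwKernel N x y * v y) + S / (N^2:ℝ)) = 0 :=
      Finset.sum_eq_zero fun x _ => hrow x
    rw [Finset.sum_add_distrib, Finset.sum_sub_distrib] at h2
    have h3 : ∑ x : Torus N, ∑ y, srwKernel N x y * v y = S := by
      rw [Finset.sum_comm]
      calc ∑ y : Torus N, ∑ x, srwKernel N x y * v y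
          = ∑ y : Torus N, (∑ x, srwKernel N x y) * v y := by
            simp [Finset.sum_mul]
        _ = S := by simp [col_sum, hS]
    rw [h3] at h2
    have hN2 : ((N:ℝ)^2) ≠ 0 := by have := NeZero.ne N; positivity
    have h4 : ∑ _x : Torus N, S / (N^2:ℝ) = S := by
      rw [Finset.sum_const, nsmul_eq_mul, hScard, mul_div_cancel₀ _ hN2]
    rw [h4] at h2
    linarith
  -- harmonicity
  have hharm : ∀ x, v x = ∑ y, srwKernel N x y * v y := by
    intro x
    have := hrow x
    rw [hS0] at this
    simp only [zero_div, add_zero] at this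
    linarith
  -- max principle
  obtain ⟨i0, -, hmax⟩ := Finset.exists_max_image Finset.univ v ⟨0, Finset.mem_univ 0⟩
  set m : ℝ := v i0 with hm
  have hstep : ∀ x, v x = m → ∀ s ∈ torusSteps N, v (x + s) = m := by
    intro x hx s hs
    have hsum0 : ∑ y, srwKernel N x y * (m - v y) = 0 := by
      have : ∑ y, srwKernel N x y * (m - v y)
          = (∑ y, srwKernel N x y) * m - ∑ y, srwKernel N x y * v y := by
        rw [Finset.sum_mul, ← Finset.sum_sub_distrib]
        congr 1; ext y; ring
      rw [this, row_sum, one_mul, ← hharm x, hx]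
      ring
    have hterm := (Finset.sum_eq_zero_iff_of_nonneg (fun y _ =>
      mul_nonneg (kernel_nonneg N x y) (by have := hmax y (Finset.mem_univ y); simp [hm]; linarith))).mp
      hsum0 (x + s) (Finset.mem_univ _)
    have hpos := kernel_step_pos N x hs
    have : m - v (x + s) = 0 := by
      rcases mul_eq_zero.mp hterm with h | h
      · exact absurd h (ne_of_gt hpos)
      · exact h
    linarith
  have h10 : ∀ x, v x = m → v (x + (1, 0)) = m := fun x hx =>
    hstep x hx (1, 0) (by simp [torusSteps])
  have h01 : ∀ x, v x = m → v (x + (0, 1)) = m := fun x hx =>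
    hstep x hx (0, 1) (by simp [torusSteps])
  have key : ∀ a b : ℕ, v (i0 + ((a : ZMod N), (b : ZMod N))) = m := by
    intro a
    induction a with
    | zero =>
      intro b
      induction b with
      | zero => simp only [Nat.cast_zero]; simpa [Prod.mk_zero_zero] using hm.symm
      | succ b ihb =>
        have := h01 _ ihb
        have heq : i0 + (((0:ℕ) : ZMod N), ((b+1 : ℕ) : ZMod N))
            = i0 + (((0:ℕ):ZMod N), (b : ZMod N)) + ((0:ZMod N), 1) := by
          push_cast
          ext <;> simp <;> ring
        rw [heq]
        exact this
    | succ a iha =>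
      intro b
      have := h10 _ (iha b)
      have heq : i0 + (((a+1 : ℕ) : ZMod N), (b : ZMod N))
          = i0 + ((a:ZMod N), (b : ZMod N)) + ((1:ZMod N), 0) := by
        push_cast
        ext <;> simp <;> ring
      rw [heq]
      exact this
  have hconst : ∀ x, v x = m := by
    intro x
    have hx : x = i0 + (((x - i0).1.val : ZMod N), ((x - i0).2.val : ZMod N)) := by
      rw [ZMod.natCast_rightInverse _, ZMod.natCast_rightInverse _]
      ext <;> simp
    rw [hx]
    exact key _ _
  have : S = (((Finset.univ : Finset (Torus N))).card : ℝ) * m := by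
    rw [hS, Finset.sum_congr rfl fun x _ => hconst x, Finset.sum_const, nsmul_eq_mul]
  rw [hS0] at this
  have hm0 : m = 0 := by
    rw [hScard] at this
    have h2 : ((N:ℝ)^2) ≠ 0 := by have := NeZero.ne N; positivity
    rcases mul_eq_zero.mp this.symm with h | h
    · exact absurd h h2
    · exact h
  apply hv
  ext x
  rw [hconst x, hm0]; rfl


lemma Jm_nonneg : (0:ℝ) ≤ 1 / (N^2 : ℝ) := by positivity

lemma Jm_le_one : 1 / ((N:ℝ)^2) ≤ 1 := by
  have h1 : (1:ℝ) ≤ (N:ℝ)^2 := by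
    have : 1 ≤ N := Nat.one_le_iff_ne_zero.mpr (NeZero.ne N)
    have : (1:ℝ) ≤ (N:ℝ) := by exact_mod_cast this
    nlinarith
  rw [div_le_one (by linarith)]
  exact h1

/-- entrywise bound for powers of `Qm`, scaled. -/
lemma Qm_pow_entry_bound (x : ℝ) (hx0 : 0 ≤ x) (t : ℕ) (a b : Torus N) :
    |((x • Qm N) ^ t) a b| ≤ x ^ t := by
  rw [smul_pow]
  rw [Matrix.smul_apply, smul_eq_mul, abs_mul, abs_pow, abs_of_nonneg hx0]
  have hq : |(Qm N ^ t) a b| ≤ 1 := by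
    cases t with
    | zero =>
      simp [Matrix.one_apply]
      split <;> simp
    | succ t =>
      rw [Qpow]
      have h1 := pow_nonneg N (t+1) a b
      have h2 := pow_le_one N (t+1) a b
      have h3 := Jm_nonneg N
      have h4 := Jm_le_one N
      rw [Matrix.sub_apply, abs_le]
      constructor
      · simp only [Jm]; linarith
      · simp only [Jm]; linarith
  calc x^t * |(Qm N ^ t) a b| ≤ x^t * 1 := by
        exact mul_le_mul_of_nonneg_left hq (by positivity)
    _ = x^t := mul_one _

lemma summable_geom_pow (x : ℝ) (hx0 : 0 ≤ x) (hx1 : x < 1) :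
    Summable (fun t : ℕ => (x • Qm N) ^ t) := by
  refine Pi.summable.mpr ?_
  intro a
  rw [Pi.summable]
  intro b
  apply Summable.of_norm_bounded (summable_geometric_of_lt_one hx0 hx1)
  intro t
  simpa using Qm_pow_entry_bound N x hx0 t a b

lemma geom_inv (x : ℝ) (hx0 : 0 ≤ x) (hx1 : x < 1) :
    (1 - x • Qm N)⁻¹ = ∑' t : ℕ, (x • Qm N) ^ t := by
  have hsum := summable_geom_pow N x hx0 hx1
  set A := x • Qm N
  set S := ∑' t : ℕ, A ^ t with hSdef
  apply Matrix.inv_eq_right_inv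
  have hmul : A * S = ∑' t : ℕ, A ^ (t+1) := by
    have hmap := hsum.hasSum.map (AddMonoidHom.mulLeft A)
      (continuous_const.mul continuous_id)
    simp only [AddMonoidHom.coe_mulLeft] at hmap
    have h := hmap.tsum_eq
    rw [← h]
    apply tsum_congr
    intro t
    simp [Function.comp, pow_succ']
  have hshift : S = 1 + ∑' t : ℕ, A ^ (t+1) := by
    rw [hSdef, hsum.tsum_eq_zero_add, pow_zero]
  rw [Matrix.sub_mul, Matrix.one_mul, hmul, hshift]
  abel

lemma entry_tsum (x : ℝ) (hx0 : 0 ≤ x) (hx1 : x < 1) (i j : Torus N) :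
    ∑' t : ℕ, ((srwKernel N ^ t) i j - 1/(N^2:ℝ)) * x ^ t
      = ((1 - x • Qm N)⁻¹) i j - 1/(N^2:ℝ) := by
  have hsum := summable_geom_pow N x hx0 hx1
  have hentry : ((∑' t : ℕ, (x • Qm N) ^ t)) i j = ∑' t : ℕ, ((x • Qm N) ^ t) i j := by
    exact ((Pi.hasSum.mp ((Pi.hasSum.mp hsum.hasSum) i)) j).tsum_eq.symm
  have hsumg : Summable fun t : ℕ => ((x • Qm N) ^ t) i j := by
    apply Summable.of_norm_bounded (summable_geometric_of_lt_one hx0 hx1)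
    intro t
    simpa using Qm_pow_entry_bound N x hx0 t i j
  have hsumf : Summable fun t : ℕ => ((srwKernel N ^ t) i j - 1/(N^2:ℝ)) * x ^ t := by
    apply Summable.of_norm_bounded (summable_geometric_of_lt_one hx0 hx1)
    intro t
    have h1 := pow_nonneg N t i j
    have h2 := pow_le_one N t i j
    have h3 := Jm_nonneg N
    have h4 := Jm_le_one N
    rw [Real.norm_eq_abs, abs_mul, abs_pow, abs_of_nonneg hx0]
    have : |(srwKernel N ^ t) i j - 1/(N^2:ℝ)| ≤ 1 := by
      rw [abs_le]; constructor <;> linarith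
    calc |(srwKernel N ^ t) i j - 1/(N^2:ℝ)| * x^t ≤ 1 * x^t :=
          mul_le_mul_of_nonneg_right this (by positivity)
      _ = x^t := one_mul _
  have hsumh : Summable fun t : ℕ => (if t = 0 then (1/(N^2:ℝ)) else 0) :=
    (hasSum_ite_eq 0 (1/(N^2:ℝ))).summable
  have hpt : ∀ t : ℕ, ((x • Qm N) ^ t) i j
      = ((srwKernel N ^ t) i j - 1/(N^2:ℝ)) * x ^ t + (if t = 0 then (1/(N^2:ℝ)) else 0) := by
    intro t
    cases t with
    | zero =>
      simp only [pow_zero, Matrix.one_apply, Nat.cast_zero, if_true]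
      split <;> ring
    | succ t =>
      rw [smul_pow, Matrix.smul_apply, Qpow, Matrix.sub_apply]
      simp only [Nat.succ_ne_zero, if_false, add_zero, smul_eq_mul, Jm]
      ring
  have hcalc : ∑' t : ℕ, ((x • Qm N) ^ t) i j
      = (∑' t : ℕ, ((srwKernel N ^ t) i j - 1/(N^2:ℝ)) * x ^ t) + (1/(N^2:ℝ)) := by
    calc ∑' t : ℕ, ((x • Qm N) ^ t) i j
        = ∑' t : ℕ, (((srwKernel N ^ t) i j - 1/(N^2:ℝ)) * x ^ t
            + (if t = 0 then (1/(N^2:ℝ)) else 0)) := tsum_congr hpt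
      _ = (∑' t : ℕ, ((srwKernel N ^ t) i j - 1/(N^2:ℝ)) * x ^ t) + (1/(N^2:ℝ)) := by
          rw [hsumf.tsum_add hsumh, (hasSum_ite_eq 0 (1/(N^2:ℝ))).tsum_eq]
  rw [geom_inv N x hx0 hx1, hentry, hcalc]
  ring

lemma green_eq (i j : Torus N) : green N i j = (Mm N)⁻¹ i j - 1/(N^2:ℝ) := by
  unfold green
  apply Filter.Tendsto.limUnder_eq
  have hdet : ContinuousAt (fun x : ℝ => ((1 - x • Qm N)⁻¹) i j) 1 := by
    have hA : Continuous fun x : ℝ => 1 - x • Qm N := by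
      apply Continuous.sub continuous_const
      exact continuous_id.smul continuous_const
    have hd : Continuous fun x : ℝ => (1 - x • Qm N).det := hA.matrix_det
    have hadj : Continuous fun x : ℝ => (1 - x • Qm N).adjugate := hA.matrix_adjugate
    have hM1 : (1 : ℝ) • Qm N = Qm N := one_smul _ _
    have hdet1 : (1 - (1:ℝ) • Qm N).det ≠ 0 := by
      rw [hM1, ← Mm_eq]; exact det_Mm_ne_zero N
    have hdc : ContinuousAt (fun x : ℝ => (1 - x • Qm N).det) 1 := hd.continuousAt
    have hinv0 : ContinuousAt (fun y : ℝ => y⁻¹) ((fun x : ℝ => (1 - x • Qm N).det) 1) :=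
      continuousAt_inv₀ (by simpa using hdet1)
    have hinv : ContinuousAt (fun x : ℝ => Ring.inverse ((1 - x • Qm N).det)) 1 := by
      simpa [Ring.inverse_eq_inv', Function.comp_def] using
        ContinuousAt.comp (f := fun x : ℝ => (1 - x • Qm N).det) hinv0 hdc
    have : ContinuousAt (fun x : ℝ =>
        Ring.inverse ((1 - x • Qm N).det) • (1 - x • Qm N).adjugate) 1 :=
      hinv.smul hadj.continuousAt
    have heq : (fun x : ℝ => ((1 - x • Qm N)⁻¹) i j)
        = fun x : ℝ => (Ring.inverse ((1 - x • Qm N).det) • (1 - x • Qm N).adjugate) i j := by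
      funext x; rw [Matrix.inv_def]
    rw [heq]
    exact ((continuous_id.matrix_elem i j).continuousAt).comp this
  have hlim : Tendsto (fun lam : ℝ => Real.exp (-lam)) (nhdsWithin 0 (Set.Ioi 0)) (nhds 1) := by
    have : Tendsto (fun lam : ℝ => Real.exp (-lam)) (nhds 0) (nhds 1) := by
      have := (Real.continuous_exp.comp continuous_neg).tendsto 0
      simpa [Function.comp_def] using this
    exact this.mono_left nhdsWithin_le_nhds
  have htend : Tendsto (fun lam : ℝ => ((1 - Real.exp (-lam) • Qm N)⁻¹) i j - 1/(N^2:ℝ))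
      (nhdsWithin 0 (Set.Ioi 0)) (nhds ((Mm N)⁻¹ i j - 1/(N^2:ℝ))) := by
    have h1 : Tendsto (fun lam : ℝ => ((1 - Real.exp (-lam) • Qm N)⁻¹) i j)
        (nhdsWithin 0 (Set.Ioi 0)) (nhds (((1 - (1:ℝ) • Qm N)⁻¹) i j)) :=
      (hdet.tendsto).comp hlim
    have h2 : ((1 - (1:ℝ) • Qm N)⁻¹) i j = (Mm N)⁻¹ i j := by
      rw [one_smul, ← Mm_eq]
    rw [h2] at h1
    exact h1.sub tendsto_const_nhds
  apply htend.congr'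
  rw [eventuallyEq_iff_exists_mem]
  refine ⟨Set.Ioi 0, self_mem_nhdsWithin, fun lam hlam => ?_⟩
  have hx0 : 0 ≤ Real.exp (-lam) := Real.exp_nonneg _
  have hx1 : Real.exp (-lam) < 1 := by
    rw [Real.exp_lt_one_iff]
    simpa using hlam
  show (1 - Real.exp (-lam) • Qm N)⁻¹ i j - 1/((N:ℝ)^2)
      = ∑' t : ℕ, ((srwKernel N ^ t) i j - 1 / (N ^ 2 : ℝ)) * Real.exp (-lam * t)
  rw [← entry_tsum N _ hx0 hx1 i j]
  apply tsum_congr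
  intro t
  congr 1
  rw [← Real.exp_nat_mul]
  ring_nf


lemma count_zero (hN : 2 ≤ N) : (torusSteps N).count (0 : Torus N) = 0 := by
  have : Fact (1 < N) := ⟨hN⟩
  rw [List.count_eq_zero]
  intro hmem
  have h1 : (1 : ZMod N) ≠ 0 := one_ne_zero
  simp only [torusSteps, List.mem_cons, List.not_mem_nil, or_false] at hmem
  rcases hmem with h | h | h | h
  · exact h1 (congrArg Prod.fst h).symm
  · exact h1 (neg_eq_zero.mp (congrArg Prod.fst h).symm)
  · exact h1 (congrArg Prod.snd h).symm
  · exact h1 (neg_eq_zero.mp (congrArg Prod.snd h).symm)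

lemma lap_eq (hN : 2 ≤ N) : lap N = (-4 : ℝ) • (1 - srwKernel N) := by
  funext i j
  by_cases h : i = j
  · subst h
    simp [lap, srwKernel, Matrix.smul_apply, Matrix.sub_apply, Matrix.one_apply,
      count_zero N hN, sub_self]
  · simp only [lap, srwKernel, Matrix.smul_apply, Matrix.sub_apply, Matrix.one_apply,
      if_neg h, smul_eq_mul]
    ring

/-- `G = M⁻¹ - J`. -/
noncomputable def Gm : Matrix (Torus N) (Torus N) ℝ := (Mm N)⁻¹ - Jm N

lemma green_eq_Gm (i j : Torus N) : green N i j = Gm N i j := by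
  rw [green_eq, Gm, Matrix.sub_apply, Jm]

lemma lap_mul_Gm (hN : 2 ≤ N) : lap N * Gm N = (-4 : ℝ) • (1 - Jm N) := by
  have hMM : Mm N * (Mm N)⁻¹ = 1 := Matrix.mul_nonsing_inv _ (isUnit_iff_ne_zero.mpr (det_Mm_ne_zero N))
  have hJMinv : Jm N * (Mm N)⁻¹ = Jm N := by
    calc Jm N * (Mm N)⁻¹ = (Jm N * Mm N) * (Mm N)⁻¹ := by rw [JM]
      _ = Jm N * (Mm N * (Mm N)⁻¹) := by rw [Matrix.mul_assoc]
      _ = Jm N := by rw [hMM, Matrix.mul_one]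
  have h1 : (1 : Matrix (Torus N) (Torus N) ℝ) - srwKernel N = Mm N - Jm N := by
    unfold Mm; abel
  rw [lap_eq N hN, h1, Matrix.smul_mul]
  congr 1
  unfold Gm
  rw [Matrix.sub_mul, Matrix.mul_sub, Matrix.mul_sub, hMM, MJ, hJMinv, JJ]
  abel


lemma lapGm_entry (hN : 2 ≤ N) (a b : Torus N) :
    ∑ k, lap N a k * Gm N k b = -4 * ((if a = b then (1:ℝ) else 0) - 1/(N^2:ℝ)) := by
  have h := Matrix.ext_iff.mpr (lap_mul_Gm N hN) a b
  rw [Matrix.mul_apply] at h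
  rw [h]
  simp only [Matrix.smul_apply, Matrix.sub_apply, Matrix.one_apply, Jm, smul_eq_mul]

lemma lap_row_sum (hN : 2 ≤ N) (a : Torus N) : ∑ k, lap N a k = 0 := by
  simp only [lap_eq N hN, Matrix.smul_apply, Matrix.sub_apply, Matrix.one_apply, smul_eq_mul]
  rw [← Finset.mul_sum, Finset.sum_sub_distrib, row_sum]
  simp


end Stmt7

open Stmt7 in
/-- The restricted Laplacian `Δ_{0ᶜ0ᶜ}` (rows/columns away from the origin) is invertible, and
`−4 ((Δ_{0ᶜ0ᶜ})⁻¹)_{ij} = G_{ij} − G_{i0} − G_{0j} + G_{00}` for `i, j ≠ 0`. -/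
theorem stmt7 (N : ℕ) [NeZero N] (hN : 2 ≤ N) :
    let Δ0 : Matrix {v : Torus N // v ≠ 0} {v : Torus N // v ≠ 0} ℝ :=
      fun i j => lap N (i : Torus N) (j : Torus N)
    IsUnit Δ0.det ∧
      ∀ i j : {v : Torus N // v ≠ 0},
        -4 * (Δ0⁻¹ i j)
          = green N (i : Torus N) (j : Torus N) - green N (i : Torus N) 0 -
              green N 0 (j : Torus N) + green N 0 0 := by
  intro Δ0
  set H : Matrix {v : Torus N // v ≠ 0} {v : Torus N // v ≠ 0} ℝ :=
    fun i j => -(1/4) * (Gm N i j - Gm N i 0 - Gm N 0 j + Gm N 0 0) with hH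
  have hDH : Δ0 * H = 1 := by
    ext i j
    rw [Matrix.mul_apply, Matrix.one_apply]
    set f : Torus N → ℝ :=
      fun k => lap N i k * (-(1/4) * (Gm N k j - Gm N k 0 - Gm N 0 j + Gm N 0 0)) with hf
    have hsub : ∑ k : {v : Torus N // v ≠ 0}, Δ0 i k * H k j
        = ∑ k ∈ ({(0:Torus N)}ᶜ : Finset (Torus N)), f k := by
      exact (Finset.sum_subtype (p := fun v : Torus N => v ≠ 0)
        ({(0:Torus N)}ᶜ : Finset (Torus N)) (by intro x; simp) f).symm
    have hcompl : ∑ k ∈ ({(0:Torus N)}ᶜ : Finset (Torus N)), f k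
        = (∑ k, f k) - f 0 := by
      have := Finset.sum_compl_add_sum ({(0:Torus N)} : Finset (Torus N)) f
      rw [Finset.sum_singleton] at this
      linarith
    have hf0 : f 0 = 0 := by rw [hf]; ring_nf
    have hA := lapGm_entry N hN (i : Torus N) (j : Torus N)
    have hB : ∑ k, lap N i k * Gm N k 0 = 4/(N^2:ℝ) := by
      rw [lapGm_entry N hN (i : Torus N) 0, if_neg i.prop]
      ring
    have hC := lap_row_sum N hN (i : Torus N)
    have hexp : ∑ k, f k = -(1/4) * ((∑ k, lap N i k * Gm N k j)
        - (∑ k, lap N i k * Gm N k 0)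
        - (∑ k, lap N i k) * Gm N 0 j + (∑ k, lap N i k) * Gm N 0 0) := by
      have e1 : ∑ k, f k = -(1/4) * ∑ k, (lap N i k * Gm N k j - lap N i k * Gm N k 0
          - lap N i k * Gm N 0 j + lap N i k * Gm N 0 0) := by
        rw [Finset.mul_sum]
        apply Finset.sum_congr rfl
        intro k _
        rw [hf]
        ring
      rw [e1]
      congr 1
      rw [Finset.sum_add_distrib, Finset.sum_sub_distrib, Finset.sum_sub_distrib,
        ← Finset.sum_mul, ← Finset.sum_mul]
    rw [hsub, hcompl, hf0, sub_zero, hexp, hA, hB, hC]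
    by_cases hij : i = j
    · rw [if_pos hij, if_pos (by rw [hij])]
      ring
    · rw [if_neg hij, if_neg (fun h => hij (Subtype.ext h))]
      ring
  constructor
  · exact Matrix.isUnit_det_of_right_inverse hDH
  · intro i j
    rw [Matrix.inv_eq_right_inv hDH]
    show -4 * (-(1/4) * (Gm N i j - Gm N i 0 - Gm N 0 j + Gm N 0 0)) = _
    rw [green_eq_Gm, green_eq_Gm, green_eq_Gm, green_eq_Gm]
    ring
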